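/- For integers n ≥ n_1 + n_2 with n_1 ≥ 1 and n_2 ≥ 0, the following identity of polynomials in the variable w holds: Σ_m R(n; n_1, n_2; m) w^m = C(n, n_1) · ((1+w)^{n_1} − 1)^{n_2} · (1+w)^{n_1 (n − n_1 − n_2)} · Σ_m D(n − n_1, m, n_2) w^m, where R(n; n_1, n_2; m) is the number of labelled DAGs on n vertices with m edges whose root-layering has first layer of size n_1 and second layer of size n_2 (for n = n_1, take n_2 = 0 and the second-layer condition vacuous). -/

import Mathlib

/-- A finite labelled digraph (edge set on `Fin n`) is acyclic if the transitive
closure of its edge relation is irreflexive. -/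
def DAcyclic {n : ℕ} (E : Finset (Fin n × Fin n)) : Prop :=
  Irreflexive (Relation.TransGen fun a b => (a, b) ∈ E)

/-- Sources of a digraph: vertices with no incoming edge. -/
def dagSources {n : ℕ} (E : Finset (Fin n × Fin n)) : Finset (Fin n) :=
  Finset.univ.filter fun v => ∀ u, (u, v) ∉ E

/-- Sources of the induced subgraph on a vertex subset `V`. -/
def sourcesIn {n : ℕ} (E : Finset (Fin n × Fin n)) (V : Finset (Fin n)) : Finset (Fin n) :=
  V.filter fun v => ∀ u ∈ V, (u, v) ∉ E

/-- Vertices remaining after peeling `k` layers of the root-layering. -/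
def dagRemaining {n : ℕ} (E : Finset (Fin n × Fin n)) : ℕ → Finset (Fin n)
  | 0 => Finset.univ
  | k + 1 => dagRemaining E k \ sourcesIn E (dagRemaining E k)

/-- The `k`-th layer (0-indexed) of the root-layering. -/
def dagLayer {n : ℕ} (E : Finset (Fin n × Fin n)) (k : ℕ) : Finset (Fin n) :=
  sourcesIn E (dagRemaining E k)


section Aux
open Finset Classical

variable {α : Type*} [DecidableEq α] [Fintype α]

lemma sum_powerset_pow (X : Finset α) (w : ℝ) :
    ∑ A ∈ X.powerset, w ^ A.card = (1 + w) ^ X.card := by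
  have := Finset.prod_add (fun _ : α => w) (fun _ => (1:ℝ)) X
  simp at this
  rw [← this]
  simp [add_comm]

lemma sum_powerset_pow_ne (X : Finset α) (w : ℝ) :
    ∑ A ∈ X.powerset, (if A.Nonempty then w ^ A.card else 0) = (1 + w) ^ X.card - 1 := by
  have h1 : ∀ A : Finset α, (if A.Nonempty then w ^ A.card else 0)
      = w ^ A.card - (if A = ∅ then w ^ A.card else 0) := by
    intro A
    rcases eq_or_ne A ∅ with rfl | hA
    · simp
    · simp [hA, Finset.nonempty_iff_ne_empty.2 hA]
  rw [Finset.sum_congr rfl fun A _ => h1 A, Finset.sum_sub_distrib, sum_powerset_pow,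
    Finset.sum_ite_eq' X.powerset (∅ : Finset α) (fun A => w ^ A.card)]
  simp
lemma sum_powerset_disjUnion (X Y : Finset α) (hd : Disjoint X Y) (f : Finset α → ℝ) :
    ∑ F ∈ (X ∪ Y).powerset, f F = ∑ A ∈ X.powerset, ∑ B ∈ Y.powerset, f (A ∪ B) := by
  rw [← Finset.sum_product']
  apply Finset.sum_nbij' (i := fun F => (F ∩ X, F ∩ Y)) (j := fun p => p.1 ∪ p.2)
  · intro F hF
    rw [Finset.mem_product]
    exact ⟨mem_powerset.2 inter_subset_right, mem_powerset.2 inter_subset_right⟩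
  · intro p hp
    rw [Finset.mem_product] at hp
    exact mem_powerset.2 (union_subset ((mem_powerset.1 hp.1).trans subset_union_left)
      ((mem_powerset.1 hp.2).trans subset_union_right))
  · intro F hF
    rw [mem_powerset] at hF
    show F ∩ X ∪ F ∩ Y = F
    rw [← Finset.inter_union_distrib_left]
    exact Finset.inter_eq_left.mpr hF
  · intro p hp
    rw [Finset.mem_product] at hp
    rw [mem_powerset] at hp
    obtain ⟨hp1, hp2⟩ := hp
    rw [mem_powerset] at hp2
    have h1 : p.1 ∩ X = p.1 := Finset.inter_eq_left.mpr hp1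
    have h2 : p.2 ∩ X = ∅ := Finset.disjoint_iff_inter_eq_empty.mp
      (Finset.disjoint_of_subset_left hp2 hd.symm)
    have h3 : p.1 ∩ Y = ∅ := Finset.disjoint_iff_inter_eq_empty.mp
      (Finset.disjoint_of_subset_left hp1 hd)
    have h4 : p.2 ∩ Y = p.2 := Finset.inter_eq_left.mpr hp2
    show ((p.1 ∪ p.2) ∩ X, (p.1 ∪ p.2) ∩ Y) = p
    rw [Finset.union_inter_distrib_right, Finset.union_inter_distrib_right, h1, h2, h3, h4,
      Finset.union_empty, Finset.empty_union]
  · intro F hF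
    show f F = f (F ∩ X ∪ F ∩ Y)
    rw [← Finset.inter_union_distrib_left, Finset.inter_eq_left.mpr (mem_powerset.1 hF)]

open Classical in
lemma hitting_sum (s : Finset α) (w : ℝ) (t : Finset α) : ∀ R : Finset α, R ⊆ t →
    ∑ F ∈ (s ×ˢ t).powerset.filter (fun F => ∀ v ∈ R, ∃ u, (u, v) ∈ F), w ^ F.card
      = ((1 + w) ^ s.card - 1) ^ R.card * (1 + w) ^ (s.card * (t.card - R.card)) := by
  induction t using Finset.induction_on with
  | empty =>
    intro R hR
    rw [Finset.subset_empty.mp hR]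
    simp
  | @insert a t' ha IH =>
    intro R hR
    set X := s ×ˢ ({a} : Finset α) with hX
    set Y := s ×ˢ t' with hY
    have hXY : s ×ˢ insert a t' = X ∪ Y := by
      ext p
      rw [hX, hY, Finset.mem_union, Finset.mem_product, Finset.mem_product,
        Finset.mem_product, Finset.mem_insert, Finset.mem_singleton]
      tauto
    have hd : Disjoint X Y := by
      rw [Finset.disjoint_left]
      intro p hp hp'
      rw [hX, Finset.mem_product] at hp
      rw [hY, Finset.mem_product] at hp'
      rw [Finset.mem_singleton] at hp
      exact ha (hp.2 ▸ hp'.2)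
    rw [Finset.sum_filter, hXY, sum_powerset_disjUnion X Y hd]
    have key : ∀ A ∈ X.powerset, ∀ B ∈ Y.powerset,
        (if (∀ v ∈ R, ∃ u, (u, v) ∈ A ∪ B) then w ^ (A ∪ B).card else 0)
        = (if (a ∈ R → A.Nonempty) then w ^ A.card else 0)
          * (if (∀ v ∈ R.erase a, ∃ u, (u, v) ∈ B) then w ^ B.card else 0) := by
      intro A hA B hB
      rw [mem_powerset] at hA hB
      have hAmem : ∀ p ∈ A, p.2 = a := by
        intro p hp; have := hA hp; rw [hX, Finset.mem_product, Finset.mem_singleton] at this; exact this.2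
      have hBmem : ∀ p ∈ B, p.2 ∈ t' := by
        intro p hp; have := hB hp; rw [hY, Finset.mem_product] at this; exact this.2
      have hcard : (A ∪ B).card = A.card + B.card := by
        apply Finset.card_union_of_disjoint
        exact Finset.disjoint_of_subset_left hA (Finset.disjoint_of_subset_right hB hd)
      have hiff : (∀ v ∈ R, ∃ u, (u, v) ∈ A ∪ B) ↔
          ((a ∈ R → A.Nonempty) ∧ ∀ v ∈ R.erase a, ∃ u, (u, v) ∈ B) := by
        constructor
        · intro hc
          constructor
          · intro haR
            obtain ⟨u, hu⟩ := hc a haR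
            rcases Finset.mem_union.mp hu with h' | h'
            · exact ⟨(u, a), h'⟩
            · exact absurd (hBmem _ h') ha
          · intro v hv
            obtain ⟨u, hu⟩ := hc v (Finset.mem_of_mem_erase hv)
            rcases Finset.mem_union.mp hu with h' | h'
            · exact absurd (hAmem _ h') (Finset.ne_of_mem_erase hv)
            · exact ⟨u, h'⟩
        · rintro ⟨h1, h2⟩ v hv
          rcases eq_or_ne v a with rfl | hva
          · obtain ⟨p, hp⟩ := h1 hv
            have hpv : (p.1, v) = p := by rw [← hAmem p hp]
            exact ⟨p.1, by rw [hpv]; exact Finset.mem_union_left _ hp⟩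
          · obtain ⟨u, hu⟩ := h2 v (Finset.mem_erase.mpr ⟨hva, hv⟩)
            exact ⟨u, Finset.mem_union_right _ hu⟩
      by_cases hc : ∀ v ∈ R, ∃ u, (u, v) ∈ A ∪ B
      · rw [if_pos hc, if_pos (hiff.mp hc).1, if_pos (hiff.mp hc).2, hcard, pow_add]
      · rw [if_neg hc]
        rw [hiff, not_and_or] at hc
        rcases hc with hc | hc
        · rw [if_neg hc, zero_mul]
        · rw [if_neg hc, mul_zero]
    rw [Finset.sum_congr rfl fun A hA => Finset.sum_congr rfl fun B hB => key A hA B hB]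
    rw [← Finset.sum_mul_sum]
    have hXcard : X.card = s.card := by simp [hX]
    by_cases haR : a ∈ R
    · have hfac1 : ∑ A ∈ X.powerset, (if (a ∈ R → A.Nonempty) then w ^ A.card else 0)
          = (1 + w) ^ s.card - 1 := by
        rw [← hXcard, ← sum_powerset_pow_ne]
        exact Finset.sum_congr rfl fun A _ => by simp [haR]
      have hRe : R.erase a ⊆ t' := by
        intro v hv
        rcases Finset.mem_insert.mp (hR (Finset.mem_of_mem_erase hv)) with h' | h'
        · exact absurd h' (Finset.ne_of_mem_erase hv)
        · exact h'
      have hfac2 := IH (R.erase a) hRe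
      rw [Finset.sum_filter] at hfac2
      rw [hfac1, hfac2]
      have hRc : R.card = (R.erase a).card + 1 := by
        rw [Finset.card_erase_of_mem haR]
        have := Finset.card_pos.mpr ⟨a, haR⟩
        omega
      have htc : (insert a t').card = t'.card + 1 := Finset.card_insert_of_notMem ha
      rw [hRc, htc]
      have : t'.card + 1 - ((R.erase a).card + 1) = t'.card - (R.erase a).card := by omega
      rw [this, pow_succ]
      ring
    · have hfac1 : ∑ A ∈ X.powerset, (if (a ∈ R → A.Nonempty) then w ^ A.card else 0)
          = (1 + w) ^ s.card := by
        rw [← hXcard, ← sum_powerset_pow]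
        exact Finset.sum_congr rfl fun A _ => by simp [haR]
      have hRe : R ⊆ t' := fun v hv => by
        rcases Finset.mem_insert.mp (hR hv) with h' | h'
        · exact absurd (h' ▸ hv) haR
        · exact h'
      have herase : R.erase a = R := Finset.erase_eq_of_notMem haR
      have hfac2 := IH R hRe
      rw [Finset.sum_filter] at hfac2
      rw [herase, hfac1, hfac2]
      have htc : (insert a t').card = t'.card + 1 := Finset.card_insert_of_notMem ha
      have hle : R.card ≤ t'.card := Finset.card_le_card hRe
      rw [htc]
      have : t'.card + 1 - R.card = (t'.card - R.card) + 1 := by omega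
      rw [this]
      have : s.card * (t'.card - R.card + 1) = s.card * (t'.card - R.card) + s.card := by ring
      rw [this, pow_add]
      ring

end Aux

section Graph
open Finset Classical

variable {n k : ℕ}

lemma layer0_eq (E : Finset (Fin n × Fin n)) : dagLayer E 0 = dagSources E := by
  unfold dagLayer dagRemaining sourcesIn dagSources
  apply Finset.filter_congr
  intro v _
  simp

lemma layer1_eq (E : Finset (Fin n × Fin n)) :
    dagLayer E 1 = sourcesIn E (dagSources E)ᶜ := by
  have h0 : sourcesIn E (dagRemaining E 0) = dagSources E := layer0_eq E
  unfold dagLayer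
  show sourcesIn E (dagRemaining E 0 \ sourcesIn E (dagRemaining E 0)) = _
  rw [h0]
  show sourcesIn E (Finset.univ \ dagSources E) = _
  rw [← Finset.compl_eq_univ_sdiff]

lemma dacyclic_subset {E G : Finset (Fin n × Fin n)} (hs : G ⊆ E) (hE : DAcyclic E) :
    DAcyclic G :=
  fun a hc => hE a (Relation.TransGen.mono (r := fun x y => (x, y) ∈ G) (p := fun x y => (x, y) ∈ E) (fun _ _ hxy => hs hxy) a a hc)

lemma transGen_confine {E G : Finset (Fin n × Fin n)} {T : Finset (Fin n)}
    (hE : ∀ p ∈ E, p.2 ∈ T) (hG : ∀ p ∈ E, p.1 ∈ T → p ∈ G) :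
    ∀ a b : Fin n, Relation.TransGen (fun x y => (x, y) ∈ E) a b → a ∈ T →
      Relation.TransGen (fun x y => (x, y) ∈ G) a b ∧ b ∈ T := by
  intro a b h
  induction h with
  | single h' => exact fun ha => ⟨Relation.TransGen.single (hG _ h' ha), hE _ h'⟩
  | tail h₁ h₂ ih => exact fun ha => ⟨(ih ha).1.tail (hG _ h₂ (ih ha).2), hE _ h₂⟩

lemma dacyclic_union {S T : Finset (Fin n)} (hd : Disjoint S T)
    {G F : Finset (Fin n × Fin n)} (hG : G ⊆ T ×ˢ T) (hF : F ⊆ S ×ˢ T)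
    (hGa : DAcyclic G) : DAcyclic (G ∪ F) := by
  intro a hcyc
  have hE : ∀ p ∈ G ∪ F, p.2 ∈ T := by
    intro p hp
    rcases Finset.mem_union.mp hp with h' | h'
    · exact (Finset.mem_product.mp (hG h')).2
    · exact (Finset.mem_product.mp (hF h')).2
  have hGc : ∀ p ∈ G ∪ F, p.1 ∈ T → p ∈ G := by
    intro p hp h1
    rcases Finset.mem_union.mp hp with h' | h'
    · exact h'
    · exact absurd h1 (Finset.disjoint_left.mp hd (Finset.mem_product.mp (hF h')).1)
  have haT : a ∈ T := by
    cases hcyc with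
    | single h' => exact hE _ h'
    | tail h₁ h₂ => exact hE _ h₂
  exact hGa a (transGen_confine hE hGc a a hcyc haT).1

lemma transGen_emb_forward (e : Fin k ↪ Fin n) (G' : Finset (Fin k × Fin k)) {a b : Fin k}
    (h : Relation.TransGen (fun x y => (x, y) ∈ G') a b) :
    Relation.TransGen (fun x y => (x, y) ∈ G'.map (e.prodMap e)) (e a) (e b) := by
  induction h with
  | single h' => exact Relation.TransGen.single (Finset.mem_map_of_mem _ h')
  | tail h₁ h₂ ih => exact ih.tail (Finset.mem_map_of_mem _ h₂)

lemma transGen_emb_back (e : Fin k ↪ Fin n) (G' : Finset (Fin k × Fin k)) {x y : Fin n}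
    (h : Relation.TransGen (fun x y => (x, y) ∈ G'.map (e.prodMap e)) x y) :
    ∃ a b : Fin k, x = e a ∧ y = e b ∧ Relation.TransGen (fun x y => (x, y) ∈ G') a b := by
  induction h with
  | single h' =>
    obtain ⟨⟨u, v⟩, hp, hpe⟩ := Finset.mem_map.mp h'
    rw [Prod.ext_iff] at hpe
    exact ⟨u, v, hpe.1.symm, hpe.2.symm, Relation.TransGen.single hp⟩
  | tail h₁ h₂ ih =>
    obtain ⟨a, b, hx, hy, htg⟩ := ih
    obtain ⟨⟨q1, q2⟩, hq, hqe⟩ := Finset.mem_map.mp h₂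
    rw [Prod.ext_iff] at hqe
    have hb : q1 = b := e.injective (by rw [show e q1 = _ from hqe.1, hy])
    exact ⟨a, q2, hx, hqe.2.symm, htg.tail (hb ▸ hq)⟩

lemma dacyclic_emb (e : Fin k ↪ Fin n) (G' : Finset (Fin k × Fin k)) :
    DAcyclic (G'.map (e.prodMap e)) ↔ DAcyclic G' := by
  constructor
  · intro hΨ a ha
    exact hΨ (e a) (transGen_emb_forward e G' ha)
  · intro hG x hx
    obtain ⟨a, b, hxa, hxb, htg⟩ := transGen_emb_back e G' hx
    have : a = b := e.injective (by rw [← hxa, ← hxb])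
    exact hG a (this ▸ htg)

lemma sourcesIn_emb (e : Fin k ↪ Fin n) (T : Finset (Fin n))
    (he : ∀ v, v ∈ T ↔ ∃ i, e i = v) (G' : Finset (Fin k × Fin k)) :
    sourcesIn (G'.map (e.prodMap e)) T = (dagSources G').map e := by
  ext v
  simp only [sourcesIn, dagSources, Finset.mem_filter, Finset.mem_map, Finset.mem_univ,
    true_and]
  constructor
  · rintro ⟨hvT, hno⟩
    obtain ⟨b, hb⟩ := (he v).mp hvT
    refine ⟨b, fun a ha => ?_, hb⟩
    exact hno (e a) ((he (e a)).mpr ⟨a, rfl⟩) ⟨(a, b), ha, by rw [← hb]; rfl⟩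
  · rintro ⟨b, hb, rfl⟩
    refine ⟨(he (e b)).mpr ⟨b, rfl⟩, fun u huT hmem => ?_⟩
    obtain ⟨⟨p1, p2⟩, hp, hpe⟩ := hmem
    rw [Prod.ext_iff] at hpe
    have h2 : e p2 = e b := hpe.2
    exact hb p1 ((e.injective h2) ▸ hp)

open Classical in
lemma sum_emb (e : Fin k ↪ Fin n) (T : Finset (Fin n)) (he : ∀ v, v ∈ T ↔ ∃ i, e i = v)
    (n2 : ℕ) (w : ℝ) :
    ∑ G ∈ (T ×ˢ T).powerset.filter (fun G => DAcyclic G ∧ (sourcesIn G T).card = n2),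
        w ^ G.card
    = ∑ E' ∈ (Finset.univ.filter fun E' : Finset (Fin k × Fin k) =>
        DAcyclic E' ∧ (dagSources E').card = n2), w ^ E'.card := by
  have heT : ∀ i, e i ∈ T := fun i => (he (e i)).mpr ⟨i, rfl⟩
  have hkey : ∀ G : Finset (Fin n × Fin n), G ⊆ T ×ˢ T →
      (Finset.univ.filter fun p : Fin k × Fin k => (e p.1, e p.2) ∈ G).map (e.prodMap e)
        = G := by
    intro G hG
    ext ⟨x, y⟩
    simp only [Finset.mem_map, Finset.mem_filter, Finset.mem_univ, true_and]
    constructor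
    · rintro ⟨⟨a, b⟩, hab, habe⟩
      rw [Prod.ext_iff] at habe
      have h1 : e a = x := habe.1
      have h2 : e b = y := habe.2
      rwa [h1, h2] at hab
    · intro hxy
      have hx := (Finset.mem_product.mp (hG hxy)).1
      have hy := (Finset.mem_product.mp (hG hxy)).2
      obtain ⟨a, ha⟩ := (he x).mp hx
      obtain ⟨b, hb⟩ := (he y).mp hy
      exact ⟨(a, b), by rw [ha, hb]; exact hxy, by rw [← ha, ← hb]; rfl⟩
  symm
  apply Finset.sum_nbij' (i := fun E' => E'.map (e.prodMap e))
    (j := fun G => Finset.univ.filter fun p : Fin k × Fin k => (e p.1, e p.2) ∈ G)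
  · intro E' hE'
    rw [Finset.mem_filter] at hE' ⊢
    obtain ⟨-, hac, hcard⟩ := hE'
    refine ⟨Finset.mem_powerset.mpr ?_, (dacyclic_emb e E').mpr hac, ?_⟩
    · intro p hp
      obtain ⟨⟨a, b⟩, hab, habe⟩ := Finset.mem_map.mp hp
      rw [← habe]
      exact Finset.mem_product.mpr ⟨heT a, heT b⟩
    · rw [sourcesIn_emb e T he E', Finset.card_map, hcard]
  · intro G hG
    rw [Finset.mem_filter] at hG
    obtain ⟨hpow, hac, hcard⟩ := hG
    rw [Finset.mem_powerset] at hpow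
    have hk := hkey G hpow
    rw [Finset.mem_filter]
    refine ⟨Finset.mem_univ _, (dacyclic_emb e _).mp (by rw [hk]; exact hac), ?_⟩
    have := sourcesIn_emb e T he (Finset.univ.filter fun p : Fin k × Fin k =>
      (e p.1, e p.2) ∈ G)
    rw [hk] at this
    rw [← Finset.card_map e, ← this, hcard]
  · intro E' _
    ext ⟨a, b⟩
    simp only [Finset.mem_filter, Finset.mem_univ, true_and, Finset.mem_map]
    constructor
    · rintro ⟨⟨a', b'⟩, hab, habe⟩
      rw [Prod.ext_iff] at habe
      have h1 : a' = a := e.injective habe.1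
      have h2 : b' = b := e.injective habe.2
      rwa [h1, h2] at hab
    · intro hab
      exact ⟨(a, b), hab, rfl⟩
  · intro G hG
    rw [Finset.mem_filter, Finset.mem_powerset] at hG
    exact hkey G hG.1
  · intro E' _
    rw [Finset.card_map]

open Classical in
lemma layer_decomp (S : Finset (Fin n)) (n2 : ℕ) (w : ℝ) :
    ∑ E ∈ Finset.univ.filter (fun E : Finset (Fin n × Fin n) =>
        DAcyclic E ∧ dagLayer E 0 = S ∧ (dagLayer E 1).card = n2), w ^ E.card
    = ∑ G ∈ (Sᶜ ×ˢ Sᶜ).powerset.filter (fun G => DAcyclic G ∧ (sourcesIn G Sᶜ).card = n2),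
        w ^ G.card *
        ∑ F ∈ (S ×ˢ Sᶜ).powerset.filter (fun F => ∀ v ∈ sourcesIn G Sᶜ, ∃ u, (u, v) ∈ F),
          w ^ F.card := by
  have hrw : ∀ G ∈ (Sᶜ ×ˢ Sᶜ).powerset.filter
      (fun G => DAcyclic G ∧ (sourcesIn G Sᶜ).card = n2),
      w ^ G.card * ∑ F ∈ (S ×ˢ Sᶜ).powerset.filter
          (fun F => ∀ v ∈ sourcesIn G Sᶜ, ∃ u, (u, v) ∈ F), w ^ F.card
        = ∑ F ∈ (S ×ˢ Sᶜ).powerset.filter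
          (fun F => ∀ v ∈ sourcesIn G Sᶜ, ∃ u, (u, v) ∈ F), w ^ (G.card + F.card) := by
    intro G _
    rw [Finset.mul_sum]
    exact Finset.sum_congr rfl fun F _ => by rw [pow_add]
  have hsig := Finset.sum_sigma
    ((Sᶜ ×ˢ Sᶜ).powerset.filter (fun G => DAcyclic G ∧ (sourcesIn G Sᶜ).card = n2))
    (fun G => (S ×ˢ Sᶜ).powerset.filter (fun F => ∀ v ∈ sourcesIn G Sᶜ, ∃ u, (u, v) ∈ F))
    (fun p => w ^ (p.1.card + p.2.card))
  rw [Finset.sum_congr rfl hrw, ← hsig]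
  apply Finset.sum_nbij'
    (i := fun E => (⟨E.filter (fun p => p.1 ∉ S), E.filter (fun p => p.1 ∈ S)⟩ :
      Σ _ : Finset (Fin n × Fin n), Finset (Fin n × Fin n)))
    (j := fun p => p.1 ∪ p.2)
  · -- maps forward
    intro E hE
    rw [Finset.mem_filter] at hE
    obtain ⟨-, hac, hL0, hL1⟩ := hE
    have hsrc : dagSources E = S := by rw [← layer0_eq, hL0]
    have hnoS : ∀ p ∈ E, p.2 ∈ Sᶜ := by
      intro p hp
      rw [Finset.mem_compl]
      intro hmem
      rw [← hsrc, dagSources, Finset.mem_filter] at hmem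
      exact hmem.2 p.1 hp
    have hEGiff : ∀ u v : Fin n, u ∈ Sᶜ → ((u, v) ∈ E ↔ (u, v) ∈ E.filter (fun p => p.1 ∉ S)) := by
      intro u v hu
      rw [Finset.mem_filter]
      exact ⟨fun h' => ⟨h', Finset.mem_compl.mp hu⟩, fun h' => h'.1⟩
    have hsrcIn : sourcesIn (E.filter (fun p => p.1 ∉ S)) Sᶜ = sourcesIn E Sᶜ := by
      unfold sourcesIn
      apply Finset.filter_congr
      intro v hv
      constructor
      · intro hno u hu h'
        exact hno u hu ((hEGiff u v hu).mp h')
      · intro hno u hu h'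
        exact hno u hu ((hEGiff u v hu).mpr h')
    rw [Finset.mem_sigma]
    constructor
    · rw [Finset.mem_filter, Finset.mem_powerset]
      refine ⟨?_, dacyclic_subset (Finset.filter_subset _ _) hac, ?_⟩
      · intro p hp
        rw [Finset.mem_filter] at hp
        exact Finset.mem_product.mpr ⟨Finset.mem_compl.mpr hp.2, hnoS p hp.1⟩
      · rw [hsrcIn]
        rw [layer1_eq, hsrc] at hL1
        exact hL1
    · rw [Finset.mem_filter, Finset.mem_powerset]
      constructor
      · intro p hp
        rw [Finset.mem_filter] at hp
        exact Finset.mem_product.mpr ⟨hp.2, hnoS p hp.1⟩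
      · intro v hv
        rw [hsrcIn] at hv
        have hvc := (Finset.mem_filter.mp hv).1
        have hvnosrc : v ∉ dagSources E := by
          rw [hsrc]; exact Finset.mem_compl.mp hvc
        rw [dagSources, Finset.mem_filter] at hvnosrc
        push_neg at hvnosrc
        obtain ⟨u, hu⟩ := hvnosrc (Finset.mem_univ v)
        by_cases huS : u ∈ S
        · exact ⟨u, Finset.mem_filter.mpr ⟨hu, huS⟩⟩
        · exfalso
          exact (Finset.mem_filter.mp hv).2 u (Finset.mem_compl.mpr huS) hu
  · -- maps backward
    rintro ⟨G, F⟩ hp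
    rw [Finset.mem_sigma, Finset.mem_filter, Finset.mem_filter, Finset.mem_powerset,
      Finset.mem_powerset] at hp
    obtain ⟨⟨hG, hGa, hGs⟩, hF, hhit⟩ := hp
    have hend : ∀ p ∈ G ∪ F, p.2 ∈ Sᶜ := by
      intro p hp'
      rcases Finset.mem_union.mp hp' with h' | h'
      · exact (Finset.mem_product.mp (hG h')).2
      · exact (Finset.mem_product.mp (hF h')).2
    have hiffG : ∀ u v : Fin n, u ∈ Sᶜ → ((u, v) ∈ G ∪ F ↔ (u, v) ∈ G) := by
      intro u v hu
      constructor
      · intro h'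
        rcases Finset.mem_union.mp h' with h'' | h''
        · exact h''
        · exact absurd (Finset.mem_product.mp (hF h'')).1 (Finset.mem_compl.mp hu)
      · exact fun h' => Finset.mem_union_left _ h'
    have hsrcIn : sourcesIn (G ∪ F) Sᶜ = sourcesIn G Sᶜ := by
      unfold sourcesIn
      apply Finset.filter_congr
      intro v hv
      constructor
      · exact fun hno u hu h' => hno u hu ((hiffG u v hu).mpr h')
      · exact fun hno u hu h' => hno u hu ((hiffG u v hu).mp h')
    have hsrc' : dagSources (G ∪ F) = S := by
      ext v
      rw [dagSources, Finset.mem_filter]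
      simp only [Finset.mem_univ, true_and]
      constructor
      · intro hno
        by_contra hvS
        have hvc : v ∈ Sᶜ := Finset.mem_compl.mpr hvS
        by_cases hvsrc : v ∈ sourcesIn G Sᶜ
        · obtain ⟨u, hu⟩ := hhit v hvsrc
          exact hno u (Finset.mem_union_right _ hu)
        · rw [sourcesIn, Finset.mem_filter] at hvsrc
          push_neg at hvsrc
          obtain ⟨u, hu, huv⟩ := hvsrc hvc
          exact hno u (Finset.mem_union_left _ huv)
      · intro hvS u hu
        exact Finset.mem_compl.mp (hend (u, v) hu) hvS
    rw [Finset.mem_filter]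
    refine ⟨Finset.mem_univ _, ?_, ?_, ?_⟩
    · exact dacyclic_union disjoint_compl_right hG hF hGa
    · rw [layer0_eq, hsrc']
    · rw [layer1_eq, hsrc', hsrcIn, hGs]
  · -- left inverse
    intro E _
    show E.filter (fun p => p.1 ∉ S) ∪ E.filter (fun p => p.1 ∈ S) = E
    rw [Finset.union_comm, Finset.filter_union_filter_not_eq]
  · -- right inverse
    rintro ⟨G, F⟩ hp
    rw [Finset.mem_sigma, Finset.mem_filter, Finset.mem_filter, Finset.mem_powerset,
      Finset.mem_powerset] at hp
    obtain ⟨⟨hG, -, -⟩, hF, -⟩ := hp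
    have h1 : (G ∪ F).filter (fun p => p.1 ∉ S) = G := by
      rw [Finset.filter_union]
      have hG1 : G.filter (fun p => p.1 ∉ S) = G :=
        Finset.filter_true_of_mem fun p hp' =>
          Finset.mem_compl.mp (Finset.mem_product.mp (hG hp')).1
      have hF1 : F.filter (fun p => p.1 ∉ S) = ∅ :=
        Finset.filter_false_of_mem fun p hp' h' => h' (Finset.mem_product.mp (hF hp')).1
      rw [hG1, hF1, Finset.union_empty]
    have h2 : (G ∪ F).filter (fun p => p.1 ∈ S) = F := by
      rw [Finset.filter_union]
      have hG1 : G.filter (fun p => p.1 ∈ S) = ∅ :=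
        Finset.filter_false_of_mem fun p hp' h' =>
          Finset.mem_compl.mp (Finset.mem_product.mp (hG hp')).1 h'
      have hF1 : F.filter (fun p => p.1 ∈ S) = F :=
        Finset.filter_true_of_mem fun p hp' => (Finset.mem_product.mp (hF hp')).1
      rw [hG1, hF1, Finset.empty_union]
    exact Sigma.ext (by simpa using h1) (by simpa using h2)
  · -- values
    intro E hE
    rw [Finset.mem_filter] at hE
    obtain ⟨-, hac, hL0, -⟩ := hE
    show w ^ E.card = w ^ (_ + _)
    congr 1
    rw [← Finset.card_union_of_disjoint]
    · congr 1
      rw [Finset.union_comm, Finset.filter_union_filter_not_eq]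
    · rw [Finset.disjoint_filter]
      exact fun p _ hp h' => hp h'

open Classical in
lemma tsum_card_filter {α : Type*} (A : Finset α) (f : α → ℕ) (N : ℕ)
    (hf : ∀ a ∈ A, f a < N) (w : ℝ) :
    ∑' m : ℕ, (((A.filter fun a => f a = m).card : ℝ) * w ^ m) = ∑ a ∈ A, w ^ (f a) := by
  rw [tsum_eq_sum (s := Finset.range N) (f := fun m => ((A.filter fun a => f a = m).card : ℝ) * w ^ m)]
  · have hstep : ∀ m ∈ Finset.range N,
        ((A.filter fun a => f a = m).card : ℝ) * w ^ m
          = ∑ a ∈ A.filter (fun a => f a = m), w ^ (f a) := by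
      intro m _
      rw [Finset.sum_congr rfl (fun a ha => by rw [(Finset.mem_filter.mp ha).2]),
        Finset.sum_const, nsmul_eq_mul]
    rw [Finset.sum_congr rfl hstep]
    exact Finset.sum_fiberwise_of_maps_to (fun a ha => Finset.mem_range.mpr (hf a ha)) _
  · intro m hm
    have : A.filter (fun a => f a = m) = ∅ := by
      apply Finset.filter_false_of_mem
      intro a ha hfa
      rw [Finset.mem_range, not_lt] at hm
      have := hf a ha
      omega
    rw [this]
    simp


end Graph

open Classical in
/-- `Dcount n m k` = number of labelled DAGs on `n` vertices with `m` edges and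
exactly `k` sources. -/
noncomputable def Dcount (n m k : ℕ) : ℕ :=
  (Finset.univ.filter fun E : Finset (Fin n × Fin n) =>
    DAcyclic E ∧ E.card = m ∧ (dagSources E).card = k).card

open Classical in
/-- `Rcount n n1 n2 m` = number of labelled DAGs on `n` vertices with `m` edges whose
root-layering has first layer of size `n1` and second layer of size `n2`. -/
noncomputable def Rcount (n n1 n2 m : ℕ) : ℕ :=
  (Finset.univ.filter fun E : Finset (Fin n × Fin n) =>
    DAcyclic E ∧ E.card = m ∧ (dagLayer E 0).card = n1 ∧ (dagLayer E 1).card = n2).card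

/-- For $n \ge n_1 + n_2$ with $n_1 \ge 1$:
$\sum_m R(n;n_1,n_2;m) w^m = \binom{n}{n_1} ((1+w)^{n_1}-1)^{n_2}
(1+w)^{n_1(n-n_1-n_2)} \sum_m D(n-n_1,m,n_2) w^m$ (an identity of polynomials in $w$,
stated here as an identity of functions of a real variable $w$). -/
theorem first_two_layers_identity (n n1 n2 : ℕ) (h1 : 1 ≤ n1) (h : n1 + n2 ≤ n) (w : ℝ) :
    ∑' m : ℕ, (Rcount n n1 n2 m : ℝ) * w ^ m
      = (n.choose n1 : ℝ) * ((1 + w) ^ n1 - 1) ^ n2 * (1 + w) ^ (n1 * (n - n1 - n2))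
        * ∑' m : ℕ, (Dcount (n - n1) m n2 : ℝ) * w ^ m := by
  classical
  set A : Finset (Finset (Fin n × Fin n)) :=
    Finset.univ.filter (fun E => DAcyclic E ∧ (dagLayer E 0).card = n1
      ∧ (dagLayer E 1).card = n2) with hA
  set B : Finset (Finset (Fin (n - n1) × Fin (n - n1))) :=
    Finset.univ.filter (fun E' => DAcyclic E' ∧ (dagSources E').card = n2) with hB
  -- LHS tsum
  have hRfilter : ∀ m, (Finset.univ.filter fun E : Finset (Fin n × Fin n) =>
      DAcyclic E ∧ E.card = m ∧ (dagLayer E 0).card = n1 ∧ (dagLayer E 1).card = n2)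
      = A.filter (fun E => E.card = m) := by
    intro m
    ext E
    simp only [hA, Finset.mem_filter, Finset.mem_univ, true_and]
    tauto
  have hcardlt : ∀ E : Finset (Fin n × Fin n), E.card < n * n + 1 := by
    intro E
    have := Finset.card_le_univ E
    simp only [Finset.card_univ, Fintype.card_prod, Fintype.card_fin] at this
    omega
  have hLHS : ∑' m : ℕ, (Rcount n n1 n2 m : ℝ) * w ^ m = ∑ E ∈ A, w ^ E.card := by
    have := tsum_card_filter A (fun E => E.card) (n * n + 1) (fun E _ => hcardlt E) w
    rw [← this]
    apply tsum_congr
    intro m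
    unfold Rcount
    rw [hRfilter m]
  have hcardlt' : ∀ E : Finset (Fin (n - n1) × Fin (n - n1)), E.card < (n-n1) * (n-n1) + 1 := by
    intro E
    have := Finset.card_le_univ E
    simp only [Finset.card_univ, Fintype.card_prod, Fintype.card_fin] at this
    omega
  have hRHS : ∑' m : ℕ, (Dcount (n - n1) m n2 : ℝ) * w ^ m = ∑ E' ∈ B, w ^ E'.card := by
    have := tsum_card_filter B (fun E => E.card) ((n-n1) * (n-n1) + 1) (fun E _ => hcardlt' E) w
    rw [← this]
    apply tsum_congr
    intro m
    unfold Dcount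
    have hsets : (Finset.univ.filter fun E : Finset (Fin (n - n1) × Fin (n - n1)) =>
        DAcyclic E ∧ E.card = m ∧ (dagSources E).card = n2)
        = B.filter (fun E => E.card = m) := by
      ext E
      simp only [hB, Finset.mem_filter, Finset.mem_univ, true_and]
      tauto
    rw [hsets]
  rw [hLHS, hRHS]
  -- fiber over the first layer
  have hfib : ∑ E ∈ A, w ^ E.card
      = ∑ S ∈ Finset.univ.powersetCard n1,
          ∑ E ∈ A.filter (fun E => dagLayer E 0 = S), w ^ E.card := by
    symm
    apply Finset.sum_fiberwise_of_maps_to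
    intro E hE
    rw [Finset.mem_powersetCard_univ]
    exact (Finset.mem_filter.mp hE).2.2.1
  rw [hfib]
  -- evaluate each fiber
  have hfiber : ∀ S ∈ Finset.univ.powersetCard n1,
      ∑ E ∈ A.filter (fun E => dagLayer E 0 = S), w ^ E.card
        = ((1 + w) ^ n1 - 1) ^ n2 * (1 + w) ^ (n1 * (n - n1 - n2))
          * ∑ E' ∈ B, w ^ E'.card := by
    intro S hS
    rw [Finset.mem_powersetCard_univ] at hS
    have hAS : A.filter (fun E => dagLayer E 0 = S)
        = Finset.univ.filter (fun E : Finset (Fin n × Fin n) =>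
            DAcyclic E ∧ dagLayer E 0 = S ∧ (dagLayer E 1).card = n2) := by
      ext E
      simp only [hA, Finset.mem_filter, Finset.mem_univ, true_and]
      constructor
      · rintro ⟨⟨hac, h1', h2'⟩, hL⟩
        exact ⟨hac, hL, h2'⟩
      · rintro ⟨hac, hL, h2'⟩
        exact ⟨⟨hac, by rw [hL, hS], h2'⟩, hL⟩
    rw [hAS, layer_decomp S n2 w]
    have hTc : (Sᶜ : Finset (Fin n)).card = n - n1 := by
      rw [Finset.card_compl, hS, Fintype.card_fin]
    -- inner sum evaluation
    have hGeval : ∀ G ∈ (Sᶜ ×ˢ Sᶜ).powerset.filter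
        (fun G => DAcyclic G ∧ (sourcesIn G Sᶜ).card = n2),
        w ^ G.card * ∑ F ∈ (S ×ˢ Sᶜ).powerset.filter
            (fun F => ∀ v ∈ sourcesIn G Sᶜ, ∃ u, (u, v) ∈ F), w ^ F.card
        = ((1 + w) ^ n1 - 1) ^ n2 * (1 + w) ^ (n1 * (n - n1 - n2)) * w ^ G.card := by
      intro G hG
      rw [Finset.mem_filter] at hG
      obtain ⟨-, -, hGs⟩ := hG
      have hs := hitting_sum S w Sᶜ (sourcesIn G Sᶜ) (Finset.filter_subset _ _)
      rw [hGs, hS, hTc] at hs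
      have hsum : ∑ F ∈ (S ×ˢ Sᶜ).powerset.filter
          (fun F => ∀ v ∈ sourcesIn G Sᶜ, ∃ u, (u, v) ∈ F), w ^ F.card
          = ((1 + w) ^ n1 - 1) ^ n2 * (1 + w) ^ (n1 * (n - n1 - n2)) := by
        convert hs using 3
      rw [hsum]
      ring
    rw [Finset.sum_congr rfl hGeval, ← Finset.mul_sum]
    congr 1
    -- embed Sᶜ into Fin (n - n1)
    have hio := Sᶜ.orderIsoOfFin hTc
    set e : Fin (n - n1) ↪ Fin n :=
      ⟨fun i => ((Sᶜ.orderIsoOfFin hTc) i : Fin n),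
        fun i j hij => (Sᶜ.orderIsoOfFin hTc).injective (Subtype.coe_injective hij)⟩ with he
    have hrange : ∀ v, v ∈ Sᶜ ↔ ∃ i, e i = v := by
      intro v
      constructor
      · intro hv
        refine ⟨(Sᶜ.orderIsoOfFin hTc).symm ⟨v, hv⟩, ?_⟩
        show ((Sᶜ.orderIsoOfFin hTc) ((Sᶜ.orderIsoOfFin hTc).symm ⟨v, hv⟩) : Fin n) = v
        rw [OrderIso.apply_symm_apply]
      · rintro ⟨i, rfl⟩
        exact ((Sᶜ.orderIsoOfFin hTc) i).2
    rw [sum_emb e Sᶜ hrange n2 w]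
  rw [Finset.sum_congr rfl hfiber, Finset.sum_const, nsmul_eq_mul,
    Finset.card_powersetCard, Finset.card_univ, Fintype.card_fin]
  ring
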